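/- Let 0 < λ₁ < λ₂ with δλ₂/λ₁ bounded, 0 < δ < 0.1, α₁, α₂ ∈ [0,1]. The Lebesgue measure of {t ∈ [0,1] : |{tλ₁} - α₁| ≤ δ/2 and |{tλ₂} - α₂| ≤ δ/2} is at most (λ₁ + 2)(2 + δλ₂/λ₁)·δ/λ₂. -/

import Mathlib

open MeasureTheory Set

/-- For `0 < λ₁ < λ₂`, `0 < δ < 0.1` and `α₁, α₂ ∈ [0,1]`, the Lebesgue measure of
`{t ∈ [0,1] : |{tλ₁} - α₁| ≤ δ/2 ∧ |{tλ₂} - α₂| ≤ δ/2}` is at most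
`(λ₁ + 2)(2 + δλ₂/λ₁)·δ/λ₂`. -/
theorem stmt11 (lam₁ lam₂ δ α₁ α₂ : ℝ) (h₁ : 0 < lam₁) (h₁₂ : lam₁ < lam₂)
    (hδ : 0 < δ) (hδ' : δ < 0.1) (hα₁ : α₁ ∈ Icc (0:ℝ) 1) (hα₂ : α₂ ∈ Icc (0:ℝ) 1) :
    volume {t : ℝ | t ∈ Icc (0:ℝ) 1 ∧ |Int.fract (t * lam₁) - α₁| ≤ δ / 2 ∧
        |Int.fract (t * lam₂) - α₂| ≤ δ / 2} ≤
      ENNReal.ofReal ((lam₁ + 2) * (2 + δ * lam₂ / lam₁) * δ / lam₂) := by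
  have hlam₂ : 0 < lam₂ := h₁.trans h₁₂
  set x : ℝ := δ * lam₂ / lam₁ with hxdef
  have hxpos : 0 < x := by positivity
  set K : ℕ := ⌊lam₁⌋.toNat + 1 with hKdef
  set M : ℕ := ⌊x⌋.toNat + 2 with hMdef
  set I : ℤ → Set ℝ := fun m =>
    Icc (((m : ℝ) + α₂ - δ/2)/lam₂) (((m : ℝ) + α₂ + δ/2)/lam₂) with hIdef
  set m₀ : ℕ → ℤ := fun k => ⌈lam₂ * ((k : ℝ) + α₁ - δ/2) / lam₁⌉ - 1 with hm₀def
  have hsub : {t : ℝ | t ∈ Icc (0:ℝ) 1 ∧ |Int.fract (t * lam₁) - α₁| ≤ δ / 2 ∧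
        |Int.fract (t * lam₂) - α₂| ≤ δ / 2} ⊆
      ⋃ k ∈ Finset.range K, ⋃ j ∈ Finset.range M, I (m₀ k + j) := by
    rintro t ⟨⟨ht0, ht1⟩, h1, h2⟩
    rw [abs_le] at h1 h2
    rw [Int.fract] at h1 h2
    set k : ℤ := ⌊t * lam₁⌋ with hkdef
    have hk0 : 0 ≤ k := Int.floor_nonneg.2 (by positivity)
    have hkK : (k.toNat) < K := by
      have : k ≤ ⌊lam₁⌋ := by
        apply Int.floor_le_floor
        nlinarith
      omega
    have hkr : ((k.toNat : ℕ) : ℝ) = (k : ℝ) := by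
      exact_mod_cast congrArg (Int.cast : ℤ → ℝ) (Int.toNat_of_nonneg hk0)
    -- bounds on t * lam₁
    have hl1 : (k : ℝ) + α₁ - δ/2 ≤ t * lam₁ := by linarith [h1.1]
    have hl2 : t * lam₁ ≤ (k : ℝ) + α₁ + δ/2 := by linarith [h1.2]
    set A : ℝ := lam₂ * ((k : ℝ) + α₁ - δ/2) / lam₁ with hAdef
    set B : ℝ := lam₂ * ((k : ℝ) + α₁ + δ/2) / lam₁ with hBdef
    have htl2 : t * lam₂ = lam₂ * (t * lam₁) / lam₁ := by
      field_simp
    have hA : A ≤ t * lam₂ := by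
      rw [htl2, hAdef]
      gcongr
    have hB : t * lam₂ ≤ B := by
      rw [htl2, hBdef]
      gcongr
    have hBA : B - A = x := by
      rw [hAdef, hBdef, hxdef]; field_simp; ring
    have hm₀eq : m₀ k.toNat = ⌈A⌉ - 1 := by
      simp only [hm₀def, hAdef, hkr]
    set m : ℤ := ⌊t * lam₂⌋ with hmdef
    have hm1 : m₀ k.toNat ≤ m := by
      have hceil : ⌈A⌉ ≤ m + 1 := by
        apply Int.ceil_le.2
        push_cast
        have := Int.lt_floor_add_one (t * lam₂)
        linarith
      rw [hm₀eq]; omega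
    have hm2 : m ≤ ⌊B⌋ := Int.le_floor.2 ((Int.floor_le _).trans hB)
    have hd : ⌊B⌋ - ⌈A⌉ ≤ ⌊x⌋ := by
      apply Int.le_floor.2
      push_cast
      have h1 := Int.floor_le B
      have h2 := Int.le_ceil A
      linarith
    have hxf : (0:ℤ) ≤ ⌊x⌋ := Int.floor_nonneg.2 hxpos.le
    have hjlt : (m - m₀ k.toNat).toNat < M := by
      rw [hm₀eq] at hm1 ⊢
      omega
    have hmem : t ∈ I m := by
      constructor
      · rw [div_le_iff₀ hlam₂]
        linarith [h2.1]
      · rw [le_div_iff₀ hlam₂]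
        linarith [h2.2]
    refine Set.mem_biUnion (Finset.mem_range.2 hkK) ?_
    refine Set.mem_biUnion (Finset.mem_range.2 hjlt) ?_
    have : m₀ k.toNat + ((m - m₀ k.toNat).toNat : ℤ) = m := by
      rw [hm₀eq] at hm1 ⊢
      omega
    rwa [this]
  calc volume {t : ℝ | t ∈ Icc (0:ℝ) 1 ∧ |Int.fract (t * lam₁) - α₁| ≤ δ / 2 ∧
        |Int.fract (t * lam₂) - α₂| ≤ δ / 2}
      ≤ volume (⋃ k ∈ Finset.range K, ⋃ j ∈ Finset.range M, I (m₀ k + j)) :=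
        measure_mono hsub
    _ ≤ ∑ k ∈ Finset.range K, volume (⋃ j ∈ Finset.range M, I (m₀ k + j)) :=
        measure_biUnion_finset_le _ _
    _ ≤ ∑ k ∈ Finset.range K, ∑ j ∈ Finset.range M, volume (I (m₀ k + j)) :=
        Finset.sum_le_sum fun _ _ => measure_biUnion_finset_le _ _
    _ = ∑ _k ∈ Finset.range K, ∑ _j ∈ Finset.range M, ENNReal.ofReal (δ / lam₂) := by
        apply Finset.sum_congr rfl; intro k _
        apply Finset.sum_congr rfl; intro j _
        rw [hIdef]
        simp only [Real.volume_Icc]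
        congr 1
        field_simp
        ring
    _ = (K : ENNReal) * ((M : ENNReal) * ENNReal.ofReal (δ / lam₂)) := by
        simp [Finset.sum_const, mul_comm]
    _ ≤ ENNReal.ofReal ((lam₁ + 2) * (2 + δ * lam₂ / lam₁) * δ / lam₂) := by
        rw [← ENNReal.ofReal_natCast K, ← ENNReal.ofReal_natCast M,
          ← ENNReal.ofReal_mul (by positivity), ← ENNReal.ofReal_mul (by positivity)]
        apply ENNReal.ofReal_le_ofReal
        have hK : (K : ℝ) ≤ lam₁ + 2 := by
          have h1 : ((⌊lam₁⌋.toNat : ℤ) : ℝ) ≤ lam₁ := by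
            rw [Int.toNat_of_nonneg (Int.floor_nonneg.2 h₁.le)]
            exact Int.floor_le lam₁
          show ((⌊lam₁⌋.toNat + 1 : ℕ) : ℝ) ≤ lam₁ + 2
          push_cast at h1 ⊢
          linarith
        have hM : (M : ℝ) ≤ 2 + x := by
          have h1 : ((⌊x⌋.toNat : ℤ) : ℝ) ≤ x := by
            rw [Int.toNat_of_nonneg (Int.floor_nonneg.2 hxpos.le)]
            exact Int.floor_le x
          show ((⌊x⌋.toNat + 2 : ℕ) : ℝ) ≤ 2 + x
          push_cast at h1 ⊢
          linarith
        rw [mul_div_assoc, ← mul_assoc]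
        have hdl : 0 ≤ δ / lam₂ := by positivity
        apply mul_le_mul_of_nonneg_right _ hdl
        exact mul_le_mul hK hM (by positivity) (by linarith)
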